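/- Let Δ be a shellable simplicial complex with shelling order F_1, …, F_m, and suppose v is a vertex of a simplicial complex Γ = {v} * Δ ∪ Δ' where no facet of Δ (the link of v) is a facet of Δ' (the deletion of v). If E_1,…,E_a is a shelling of Δ' and G_1,…,G_b is a shelling of Δ, then E_1,…,E_a, G_1∪{v},…,G_b∪{v} is a shelling of Γ. -/

import Mathlib

variable {V : Type*} [DecidableEq V]

/-- A (finite abstract) simplicial complex. -/
def IsComplex (Δ : Finset (Finset V)) : Prop :=
  ∀ F ∈ Δ, ∀ G ⊆ F, G ∈ Δ

/-- `F` is a facet (maximal face) of `Δ`. -/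
def IsFacetOf (Δ : Finset (Finset V)) (F : Finset V) : Prop :=
  F ∈ Δ ∧ ∀ G ∈ Δ, F ⊆ G → F = G

/-- `l` is a shelling order of the complex `Δ`: it enumerates the facets of `Δ`
without repetition, and for each `j > 0` the intersection of the `j`-th facet
with the subcomplex generated by the previous facets is pure of dimension
`dim(F_j) - 1`. -/
def IsShelling (Δ : Finset (Finset V)) (l : List (Finset V)) : Prop :=
  l.Nodup ∧ (∀ F : Finset V, IsFacetOf Δ F ↔ F ∈ l) ∧
  ∀ j, j < l.length → 0 < j →
    ∀ G : Finset V, G ⊆ l.getD j ∅ → (∃ k < j, G ⊆ l.getD k ∅) →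
      ∃ H : Finset V, G ⊆ H ∧ H ⊆ l.getD j ∅ ∧ (∃ k < j, H ⊆ l.getD k ∅) ∧
        H.card + 1 = (l.getD j ∅).card



lemma getD_eq_getElem' {α : Type*} (l : List α) (d : α) {n : ℕ} (h : n < l.length) :
    l.getD n d = l[n] := by
  rw [List.getD_eq_getElem?_getD, List.getElem?_eq_getElem h]; rfl

lemma exists_facet_superset {Δ : Finset (Finset V)} {F : Finset V} (hF : F ∈ Δ) :
    ∃ H, IsFacetOf Δ H ∧ F ⊆ H := by
  obtain ⟨m, hm, hmax⟩ : ∃ m ∈ Δ.filter (F ⊆ ·), ∀ x ∈ Δ.filter (F ⊆ ·), ¬ m < x := by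
    obtain ⟨m, hm⟩ := Finset.exists_maximal (s := Δ.filter (F ⊆ ·)) ⟨F, by simp [hF]⟩
    exact ⟨m, hm.1, fun x hx hlt => lt_irrefl m (lt_of_lt_of_le hlt (hm.2 hx hlt.le))⟩
  rw [Finset.mem_filter] at hm
  refine ⟨m, ⟨hm.1, fun K hK hmK => ?_⟩, hm.2⟩
  by_contra hne
  exact hmax K (Finset.mem_filter.mpr ⟨hK, hm.2.trans hmK⟩)
    (Finset.lt_iff_ssubset.mpr (ssubset_iff_subset_ne.mpr ⟨hmK, hne⟩))

/-- if `Γ = ({v} * Δ) ∪ Δ'` where `Δ` is the link of `v` and `Δ'`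
the deletion of `v`, no facet of the link is a facet of the deletion, `E` is a
shelling of the deletion `Δ'` and `G` is a shelling of the link `Δ`, then
`E` followed by the facets of the link with `v` adjoined is a shelling of `Γ`. -/
theorem stmt13 (Δ Δ' : Finset (Finset V)) (v : V)
    (hΔ : IsComplex Δ) (hΔ' : IsComplex Δ')
    (hvΔ : ∀ F ∈ Δ, v ∉ F) (hvΔ' : ∀ F ∈ Δ', v ∉ F)
    (hsub : Δ ⊆ Δ')
    (hfac : ∀ F : Finset V, IsFacetOf Δ F → ¬ IsFacetOf Δ' F)
    (E G : List (Finset V))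
    (hE : IsShelling Δ' E) (hG : IsShelling Δ G) :
    IsShelling (Δ' ∪ Δ.image (insert v)) (E ++ G.map (insert v)) := by

  obtain ⟨hEnd, hEiff, hEsh⟩ := hE
  obtain ⟨hGnd, hGiff, hGsh⟩ := hG
  -- facts about membership
  have hEmem : ∀ F ∈ E, IsFacetOf Δ' F := fun F hF => (hEiff F).mpr hF
  have hGmem : ∀ F ∈ G, IsFacetOf Δ F := fun F hF => (hGiff F).mpr hF
  -- facet of Δ' is facet of Γ
  have facA : ∀ F, IsFacetOf Δ' F → IsFacetOf (Δ' ∪ Δ.image (insert v)) F := by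
    intro F hF
    refine ⟨Finset.mem_union_left _ hF.1, fun H hH hFH => ?_⟩
    rcases Finset.mem_union.mp hH with h | h
    · exact hF.2 H h hFH
    · obtain ⟨K, hK, rfl⟩ := Finset.mem_image.mp h
      have hvF := hvΔ' F hF.1
      have hFK : F ⊆ K := fun x hx => by
        rcases Finset.mem_insert.mp (hFH hx) with rfl | h'
        · exact absurd hx hvF
        · exact h'
      have hFeq : F = K := hF.2 K (hsub hK) hFK
      subst hFeq
      exact absurd hF (hfac F ⟨hK, fun L hL hFL => hF.2 L (hsub hL) hFL⟩)
  -- facet of Δ gives facet of Γ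
  have facB : ∀ K, IsFacetOf Δ K → IsFacetOf (Δ' ∪ Δ.image (insert v)) (insert v K) := by
    intro K hK
    refine ⟨Finset.mem_union_right _ (Finset.mem_image_of_mem _ hK.1), fun H hH hFH => ?_⟩
    rcases Finset.mem_union.mp hH with h | h
    · exact absurd (hFH (Finset.mem_insert_self v K)) (hvΔ' H h)
    · obtain ⟨L, hL, rfl⟩ := Finset.mem_image.mp h
      have hKL : K ⊆ L := fun x hx => by
        rcases Finset.mem_insert.mp (hFH (Finset.mem_insert_of_mem hx)) with rfl | h'
        · exact absurd hx (hvΔ K hK.1)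
        · exact h'
      rw [hK.2 L hL hKL]
  constructor
  · -- Nodup
    rw [List.nodup_append']
    refine ⟨hEnd, ?_, ?_⟩
    · refine hGnd.map_on fun x hx y hy hxy => ?_
      have hvx := hvΔ x (hGmem x hx).1
      have hvy := hvΔ y (hGmem y hy).1
      have := congrArg (Finset.erase · v) hxy
      simpa [Finset.erase_insert hvx, Finset.erase_insert hvy] using this
    · intro x hxE hxM
      obtain ⟨K, hK, rfl⟩ := List.mem_map.mp hxM
      exact hvΔ' _ (hEmem _ hxE).1 (Finset.mem_insert_self v K)
  constructor
  · -- facet characterization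
    intro F
    constructor
    · intro hF
      rcases Finset.mem_union.mp hF.1 with h | h
      · -- F ∈ Δ'
        refine List.mem_append.mpr (Or.inl ((hEiff F).mp ⟨h, fun K hK hFK => hF.2 K (Finset.mem_union_left _ hK) hFK⟩))
      · obtain ⟨K, hK, rfl⟩ := Finset.mem_image.mp h
        have hKfac : IsFacetOf Δ K := by
          refine ⟨hK, fun L hL hKL => ?_⟩
          have := hF.2 (insert v L) (Finset.mem_union_right _ (Finset.mem_image_of_mem _ hL))
            (Finset.insert_subset_insert v hKL)
          have hvK := hvΔ K hK
          have hvL := hvΔ L hL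
          have := congrArg (Finset.erase · v) this
          simpa [Finset.erase_insert hvK, Finset.erase_insert hvL] using this
        exact List.mem_append.mpr (Or.inr (List.mem_map.mpr ⟨K, (hGiff K).mp hKfac, rfl⟩))
    · intro hF
      rcases List.mem_append.mp hF with h | h
      · exact facA F (hEmem F h)
      · obtain ⟨K, hK, rfl⟩ := List.mem_map.mp h
        exact facB K (hGmem K hK)
  · -- shelling condition
    intro j hj hj0 G' hG'sub hprev
    rw [List.length_append, List.length_map] at hj
    by_cases hjE : j < E.length
    · -- within E part
      have hgetj : (E ++ G.map (insert v)).getD j ∅ = E.getD j ∅ := by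
        rw [List.getD_eq_getElem?_getD, List.getD_eq_getElem?_getD,
          List.getElem?_append_left hjE]
      obtain ⟨k, hk, hGk⟩ := hprev
      have hgetk : (E ++ G.map (insert v)).getD k ∅ = E.getD k ∅ := by
        rw [List.getD_eq_getElem?_getD, List.getD_eq_getElem?_getD,
          List.getElem?_append_left (hk.trans hjE)]
      rw [hgetj] at hG'sub
      rw [hgetk] at hGk
      obtain ⟨H, h1, h2, ⟨k2, hk2, h3⟩, h4⟩ := hEsh j hjE hj0 G' hG'sub ⟨k, hk, hGk⟩
      have hgetk2 : (E ++ G.map (insert v)).getD k2 ∅ = E.getD k2 ∅ := by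
        rw [List.getD_eq_getElem?_getD, List.getD_eq_getElem?_getD,
          List.getElem?_append_left (hk2.trans hjE)]
      exact ⟨H, h1, hgetj ▸ h2, ⟨k2, hk2, hgetk2 ▸ h3⟩, hgetj ▸ h4⟩
    · push_neg at hjE
      set i := j - E.length with hi
      have hiG : i < G.length := by omega
      have hgetmap : ∀ m (hm : m < G.length),
          (E ++ G.map (insert v)).getD (E.length + m) ∅ = insert v (G.getD m ∅) := by
        intro m hm
        rw [getD_eq_getElem' _ _ (by simp; omega), getD_eq_getElem' _ _ hm]
        rw [List.getElem_append_right (by omega)]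
        simp
      have hgetj : (E ++ G.map (insert v)).getD j ∅ = insert v (G.getD i ∅) := by
        have := hgetmap i hiG
        rwa [show E.length + i = j by omega] at this
      set Gi := G.getD i ∅ with hGi
      have hGimem : Gi ∈ G := by
        rw [hGi, getD_eq_getElem' _ _ hiG]; exact List.getElem_mem _
      have hGiΔ : Gi ∈ Δ := (hGmem Gi hGimem).1
      have hvGi : v ∉ Gi := hvΔ Gi hGiΔ
      rw [hgetj] at hG'sub
      by_cases hvG' : v ∈ G'
      · -- previous witness must be in the map part
        obtain ⟨k, hk, hGk⟩ := hprev
        have hkE : E.length ≤ k := by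
          by_contra hlt
          push_neg at hlt
          have hgetk : (E ++ G.map (insert v)).getD k ∅ = E.getD k ∅ := by
            rw [List.getD_eq_getElem?_getD, List.getD_eq_getElem?_getD,
              List.getElem?_append_left hlt]
          rw [hgetk, getD_eq_getElem' _ _ hlt] at hGk
          exact hvΔ' _ (hEmem _ (List.getElem_mem _)).1 (hGk hvG')
        set k' := k - E.length with hk'
        have hk'i : k' < i := by omega
        have hk'G : k' < G.length := by omega
        have hgetk : (E ++ G.map (insert v)).getD k ∅ = insert v (G.getD k' ∅) := by
          have := hgetmap k' hk'G
          rwa [show E.length + k' = k by omega] at this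
        rw [hgetk] at hGk
        have herase1 : G'.erase v ⊆ G.getD k' ∅ := by
          intro x hx
          rcases Finset.mem_insert.mp (hGk (Finset.mem_of_mem_erase hx)) with rfl | h
          · exact absurd rfl (Finset.ne_of_mem_erase hx)
          · exact h
        have herase2 : G'.erase v ⊆ Gi := by
          intro x hx
          rcases Finset.mem_insert.mp (hG'sub (Finset.mem_of_mem_erase hx)) with rfl | h
          · exact absurd rfl (Finset.ne_of_mem_erase hx)
          · exact h
        obtain ⟨H, h1, h2, ⟨k2, hk2, h3⟩, h4⟩ :=
          hGsh i hiG (by omega) (G'.erase v) herase2 ⟨k', hk'i, herase1⟩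
        refine ⟨insert v H, ?_, hgetj ▸ Finset.insert_subset_insert v h2, ?_, ?_⟩
        · intro x hx
          rcases eq_or_ne x v with rfl | hne
          · exact Finset.mem_insert_self _ _
          · exact Finset.mem_insert_of_mem (h1 (Finset.mem_erase.mpr ⟨hne, hx⟩))
        · refine ⟨E.length + k2, by omega, ?_⟩
          rw [hgetmap k2 (by omega)]
          exact Finset.insert_subset_insert v h3
        · rw [hgetj]
          have hvH : v ∉ H := fun hv => hvGi (h2 hv)
          rw [← hGi] at h4
          rw [Finset.card_insert_of_notMem hvH, Finset.card_insert_of_notMem hvGi]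
          omega
      · -- v ∉ G' : take H = Gi
        have hG'Gi : G' ⊆ Gi := by
          intro x hx
          rcases Finset.mem_insert.mp (hG'sub hx) with rfl | h
          · exact absurd hx hvG'
          · exact h
        obtain ⟨Hf, hHf, hGiHf⟩ := exists_facet_superset (hsub hGiΔ)
        have hHfE : Hf ∈ E := (hEiff Hf).mp hHf
        obtain ⟨k0, hk0, hk0eq⟩ := List.getElem_of_mem hHfE
        refine ⟨Gi, hG'Gi, ?_, ⟨k0, by omega, ?_⟩, ?_⟩
        · rw [hgetj]; exact Finset.subset_insert v Gi
        · have : (E ++ G.map (insert v)).getD k0 ∅ = Hf := by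
            rw [List.getD_eq_getElem?_getD, List.getElem?_append_left hk0,
              List.getElem?_eq_getElem hk0]
            simp [hk0eq]
          rw [this]; exact hGiHf
        · rw [hgetj, Finset.card_insert_of_notMem hvGi]
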